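/- Let u : ℝ⁺ → ℝ⁺ be strictly increasing and twice differentiable with u' strictly decreasing, and suppose the absolute risk aversion A_u(z) = -u''(z)/u'(z) is strictly decreasing. Fix x > 0 and define q(z) := u'(x+z)·u'(x-z) for z ∈ (0,x). Then q is strictly increasing on (0,x). -/

import Mathlib

open Set

/-- Lemma A.2: if the absolute risk aversion
`A_u(z) = -u''(z)/u'(z)` is strictly decreasing, then for fixed `x > 0`
the function `q(z) = u'(x+z)·u'(x-z)` is strictly increasing on `(0,x)`. -/
theorem product_marginal_strictMono
    (u : ℝ → ℝ)
    (humono : StrictMonoOn u (Ici 0))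
    (hdiff : ∀ z ∈ Ioi (0:ℝ), DifferentiableAt ℝ u z)
    (hdiff2 : ∀ z ∈ Ioi (0:ℝ), DifferentiableAt ℝ (deriv u) z)
    (hu'pos : ∀ z ∈ Ioi (0:ℝ), 0 < deriv u z)
    (hu'anti : StrictAntiOn (deriv u) (Ioi 0))
    (hAanti : StrictAntiOn (fun z => -(deriv (deriv u) z) / deriv u z) (Ioi 0))
    (x : ℝ) (hx : 0 < x) :
    StrictMonoOn (fun z => deriv u (x + z) * deriv u (x - z)) (Ioo 0 x) := by
  have key : ∀ z ∈ Ioo (0:ℝ) x,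
      HasDerivAt (fun z => deriv u (x + z) * deriv u (x - z))
        (deriv (deriv u) (x + z) * deriv u (x - z) +
          deriv u (x + z) * (-(deriv (deriv u) (x - z)))) z := by
    intro z hz
    have h1 : (0:ℝ) < x + z := by linarith [hz.1]
    have h2 : (0:ℝ) < x - z := by linarith [hz.2]
    have hA : HasDerivAt (fun z : ℝ => deriv u (x + z)) (deriv (deriv u) (x + z)) z := by
      have h := ((hdiff2 (x + z) h1).hasDerivAt).comp z ((hasDerivAt_id z).const_add x)
      show HasDerivAt (deriv u ∘ HAdd.hAdd x) _ z
      simpa using h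
    have hB : HasDerivAt (fun z : ℝ => deriv u (x - z)) (-(deriv (deriv u) (x - z))) z := by
      have h := ((hdiff2 (x - z) h2).hasDerivAt).comp z ((hasDerivAt_id z).neg.const_add x)
      show HasDerivAt (deriv u ∘ HSub.hSub x) _ z
      simpa [sub_eq_add_neg] using h
    show HasDerivAt ((fun z => deriv u (x + z)) * fun z => deriv u (x - z)) _ z
    simpa [mul_comm] using hA.mul hB
  apply strictMonoOn_of_deriv_pos (convex_Ioo 0 x)
  · intro z hz
    exact (key z hz).continuousAt.continuousWithinAt
  · intro z hz
    rw [interior_Ioo] at hz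
    rw [(key z hz).deriv]
    have h1 : (x + z) ∈ Ioi (0:ℝ) := by simp; linarith [hz.1]
    have h2 : (x - z) ∈ Ioi (0:ℝ) := by simp only [mem_Ioi]; linarith [hz.2]
    have hba : x - z < x + z := by linarith [hz.1]
    have hA := hAanti h2 h1 hba
    have p1 := hu'pos _ h1
    have p2 := hu'pos _ h2
    rw [div_lt_div_iff₀ p1 p2] at hA
    nlinarith [hA, p1, p2]
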